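/- arXiv:1405.4270 — 4 statements merged into one kernel-verified Lean document; each statement's English description precedes it below -/
import Mathlib

section
/- Fix a real α with 0 < α ≤ 1 and t > 0. Then the function (λ₁, …, λₙ) ↦ Σ_{i=1}^n u(λᵢ t), where u(s) = s^α / (e^{s^α} − 1), is Schur-convex on (0, ∞)ⁿ: if (λ₁,…,λₙ) is majorized by (θ₁,…,θₙ), then Σ_{i=1}^n u(λᵢ t) ≤ Σ_{i=1}^n u(θᵢ t). Equivalently, for each fixed t > 0 the reverse hazard rate r_{n:n}^λ(t) = (α/t)·Σ_{i=1}^n u(λᵢ t) of a parallel system of independent Weibull components W(α, λ₁), …, W(α, λₙ) is a Schur-convex function of the scale parameters. -/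
open Real Set

/-- `x` is weakly majorized (from below) by `y`: for every `j`, the sum of the `j`
smallest components of `x` is at least the sum of the `j` smallest components of `y`.
Equivalently: for every subset `s` of indices there is a subset `u` of the same
cardinality with `∑_{i ∈ u} y i ≤ ∑_{i ∈ s} x i`. -/
def WeaklyMajorizedBy {n : ℕ} (x y : Fin n → ℝ) : Prop :=
  ∀ s : Finset (Fin n), ∃ u : Finset (Fin n),
    u.card = s.card ∧ ∑ i ∈ u, y i ≤ ∑ i ∈ s, x i

/-- `x` is majorized by `y`: the partial sums of the `j` smallest components of `x`
dominate those of `y`, and the total sums agree. -/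
def MajorizedBy {n : ℕ} (x y : Fin n → ℝ) : Prop :=
  WeaklyMajorizedBy x y ∧ ∑ i, x i = ∑ i, y i

namespace WRSC

lemma expm1_pos {s : ℝ} (hs : 0 < s) : 0 < Real.exp s - 1 := by
  have h := Real.add_one_lt_exp (ne_of_gt hs)
  linarith

/-- `q(s) = (s-2)e^s + (s+2) ≥ 0` for `s ≥ 0`. -/
lemma q_nonneg {s : ℝ} (hs : 0 ≤ s) : 0 ≤ (s - 2) * Real.exp s + (s + 2) := by
  set q : ℝ → ℝ := fun z => (z - 2) * Real.exp z + (z + 2) with hqdef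
  set q' : ℝ → ℝ := fun z => (z - 1) * Real.exp z + 1 with hq'def
  have hdq : ∀ z : ℝ, HasDerivAt q (q' z) z := by
    intro z
    have h1 : HasDerivAt (fun w : ℝ => (w - 2) * Real.exp w)
        (1 * Real.exp z + (z - 2) * Real.exp z) z :=
      (((hasDerivAt_id z).sub_const 2).mul (Real.hasDerivAt_exp z))
    have h2 : HasDerivAt (fun w : ℝ => w + 2) 1 z := (hasDerivAt_id z).add_const 2
    have := h1.add h2
    refine this.congr_deriv ?_
    simp only [hq'def]; ring
  have hdq' : ∀ z : ℝ, HasDerivAt q' (z * Real.exp z) z := by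
    intro z
    have h1 : HasDerivAt (fun w : ℝ => (w - 1) * Real.exp w)
        (1 * Real.exp z + (z - 1) * Real.exp z) z :=
      (((hasDerivAt_id z).sub_const 1).mul (Real.hasDerivAt_exp z))
    have := h1.add_const 1
    refine this.congr_deriv ?_
    ring
  have hq'mono : MonotoneOn q' (Ici (0:ℝ)) := by
    apply monotoneOn_of_deriv_nonneg (convex_Ici 0)
    · exact fun z _ => (hdq' z).continuousAt.continuousWithinAt
    · exact fun z _ => (hdq' z).differentiableAt.differentiableWithinAt
    · intro z hz
      rw [interior_Ici] at hz
      rw [(hdq' z).deriv]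
      exact mul_nonneg (le_of_lt hz) (Real.exp_pos z).le
  have hq'nonneg : ∀ z : ℝ, 0 ≤ z → 0 ≤ q' z := by
    intro z hz
    have h0 : q' 0 = 0 := by simp [hq'def]
    have := hq'mono (mem_Ici.mpr (le_refl 0)) (mem_Ici.mpr hz) hz
    rw [h0] at this; exact this
  have hqmono : MonotoneOn q (Ici (0:ℝ)) := by
    apply monotoneOn_of_deriv_nonneg (convex_Ici 0)
    · exact fun z _ => (hdq z).continuousAt.continuousWithinAt
    · exact fun z _ => (hdq z).differentiableAt.differentiableWithinAt
    · intro z hz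
      rw [interior_Ici] at hz
      rw [(hdq z).deriv]
      exact hq'nonneg z (le_of_lt hz)
  have h0 : q 0 = 0 := by simp [hqdef]
  have := hqmono (mem_Ici.mpr (le_refl 0)) (mem_Ici.mpr hs) hs
  rw [h0] at this
  exact this

/-- the derivative of `s ↦ s / (e^s - 1)`. -/
noncomputable def psi : ℝ → ℝ :=
  fun s => (Real.exp s - 1 - s * Real.exp s) / (Real.exp s - 1) ^ 2

lemma psi_hasDeriv {s : ℝ} (hs : 0 < s) :
    HasDerivAt psi
      (Real.exp s * ((s - 2) * Real.exp s + (s + 2)) / (Real.exp s - 1) ^ 3) s := by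
  have hE := expm1_pos hs
  have hN : HasDerivAt (fun z : ℝ => Real.exp z - 1 - z * Real.exp z)
      (Real.exp s - (1 * Real.exp s + s * Real.exp s)) s :=
    ((Real.hasDerivAt_exp s).sub_const 1).sub ((hasDerivAt_id s).mul (Real.hasDerivAt_exp s))
  have hD : HasDerivAt (fun z : ℝ => (Real.exp z - 1) ^ 2)
      ((2 : ℕ) * (Real.exp s - 1) ^ 1 * Real.exp s) s :=
    ((Real.hasDerivAt_exp s).sub_const 1).pow 2
  have h := hN.div hD (by positivity)
  refine h.congr_deriv ?_
  field_simp
  ring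

lemma psi_nonpos {s : ℝ} (hs : 0 < s) : psi s ≤ 0 := by
  have h := Real.add_one_le_exp (-s)
  rw [Real.exp_neg] at h
  have hp := Real.exp_pos s
  have hnum : Real.exp s - 1 - s * Real.exp s ≤ 0 := by
    have h2 : (1 - s) * Real.exp s ≤ 1 := by
      have := mul_le_mul_of_nonneg_right h hp.le
      rw [inv_mul_cancel₀ (ne_of_gt hp)] at this
      linarith [this]
    nlinarith
  exact div_nonpos_of_nonpos_of_nonneg hnum (sq_nonneg _)

lemma psi_mono : MonotoneOn psi (Ioi (0:ℝ)) := by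
  apply monotoneOn_of_deriv_nonneg (convex_Ioi 0)
  · exact fun z hz => (psi_hasDeriv hz).continuousAt.continuousWithinAt
  · intro z hz
    rw [interior_Ioi] at hz
    exact (psi_hasDeriv hz).differentiableAt.differentiableWithinAt
  · intro z hz
    rw [interior_Ioi] at hz
    rw [(psi_hasDeriv hz).deriv]
    apply div_nonneg
    · exact mul_nonneg (Real.exp_pos z).le (q_nonneg hz.le)
    · exact (pow_pos (expm1_pos hz) 3).le

/-- derivative of `φ(s) = s / (e^s - 1)` is `psi s`. -/
lemma phi_hasDeriv {s : ℝ} (hs : 0 < s) :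
    HasDerivAt (fun z : ℝ => z / (Real.exp z - 1)) (psi s) s := by
  have hE := expm1_pos hs
  have h := (hasDerivAt_id s).div ((Real.hasDerivAt_exp s).sub_const 1) (ne_of_gt hE)
  refine h.congr_deriv ?_
  simp only [psi, id_eq, one_mul]

noncomputable def Gfun (α t : ℝ) : ℝ → ℝ :=
  fun l => (l * t) ^ α / (Real.exp ((l * t) ^ α) - 1)

noncomputable def Gder (α t : ℝ) : ℝ → ℝ :=
  fun l => psi ((l * t) ^ α) * (α * (l * t) ^ (α - 1) * t)

lemma Gfun_hasDeriv {α t : ℝ} (hα : 0 < α) (ht : 0 < t) {l : ℝ} (hl : 0 < l) :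
    HasDerivAt (Gfun α t) (Gder α t l) l := by
  have hlt : 0 < l * t := mul_pos hl ht
  have hw : HasDerivAt (fun z : ℝ => (z * t) ^ α) (α * (l * t) ^ (α - 1) * t) l := by
    have h1 : HasDerivAt (fun z : ℝ => z * t) t l := hasDerivAt_mul_const t
    have h2 : HasDerivAt (fun x : ℝ => x ^ α) (α * (l * t) ^ (α - 1)) (l * t) :=
      Real.hasDerivAt_rpow_const (Or.inl hlt.ne')
    exact h2.comp l h1
  have hs : 0 < (l * t) ^ α := Real.rpow_pos_of_pos hlt α
  exact (phi_hasDeriv hs).comp l hw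

lemma Gder_mono {α t : ℝ} (hα : 0 < α) (hα1 : α ≤ 1) (ht : 0 < t) :
    MonotoneOn (Gder α t) (Ioi (0:ℝ)) := by
  intro a ha b hb hab
  rw [mem_Ioi] at ha hb
  have hat : 0 < a * t := mul_pos ha ht
  have hbt : 0 < b * t := mul_pos hb ht
  have habt : a * t ≤ b * t := mul_le_mul_of_nonneg_right hab ht.le
  have hwa : 0 < (a * t) ^ α := Real.rpow_pos_of_pos hat α
  have hwb : 0 < (b * t) ^ α := Real.rpow_pos_of_pos hbt α
  have hw_le : (a * t) ^ α ≤ (b * t) ^ α := Real.rpow_le_rpow hat.le habt hα.le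
  have hpsi_le : psi ((a * t) ^ α) ≤ psi ((b * t) ^ α) :=
    psi_mono (mem_Ioi.mpr hwa) (mem_Ioi.mpr hwb) hw_le
  have hpsib : psi ((b * t) ^ α) ≤ 0 := psi_nonpos hwb
  have hB_le : (b * t) ^ (α - 1) ≤ (a * t) ^ (α - 1) :=
    Real.rpow_le_rpow_of_nonpos hat habt (by linarith)
  have hBb : 0 ≤ (b * t) ^ (α - 1) := (Real.rpow_pos_of_pos hbt _).le
  have hBa : 0 ≤ (a * t) ^ (α - 1) := (Real.rpow_pos_of_pos hat _).le
  show psi ((a * t) ^ α) * (α * (a * t) ^ (α - 1) * t) ≤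
      psi ((b * t) ^ α) * (α * (b * t) ^ (α - 1) * t)
  have hBab' : α * (b * t) ^ (α - 1) * t ≤ α * (a * t) ^ (α - 1) * t := by
    apply mul_le_mul_of_nonneg_right _ ht.le
    exact mul_le_mul_of_nonneg_left hB_le hα.le
  calc psi ((a * t) ^ α) * (α * (a * t) ^ (α - 1) * t)
      ≤ psi ((b * t) ^ α) * (α * (a * t) ^ (α - 1) * t) := by
        apply mul_le_mul_of_nonneg_right hpsi_le (by positivity)
    _ ≤ psi ((b * t) ^ α) * (α * (b * t) ^ (α - 1) * t) := by
        exact mul_le_mul_of_nonpos_left hBab' hpsib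

lemma support_line {f f' : ℝ → ℝ} (hd : ∀ z ∈ Ioi (0:ℝ), HasDerivAt f (f' z) z)
    (hm : MonotoneOn f' (Ioi (0:ℝ))) {a b : ℝ} (ha : 0 < a) (hb : 0 < b) :
    f a + f' a * (b - a) ≤ f b := by
  rcases lt_trichotomy a b with h | h | h
  · have hcont : ContinuousOn f (Icc a b) := fun z hz =>
      (hd z (lt_of_lt_of_le ha hz.1)).continuousAt.continuousWithinAt
    obtain ⟨c, hc, hceq⟩ := exists_hasDerivAt_eq_slope f f' h hcont
      (fun z hz => hd z (lt_trans ha hz.1))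
    have h1 : f' a ≤ f' c := hm (mem_Ioi.mpr ha) (mem_Ioi.mpr (lt_trans ha hc.1)) hc.1.le
    have hba : 0 < b - a := sub_pos.mpr h
    have h2 : f' a * (b - a) ≤ f' c * (b - a) := mul_le_mul_of_nonneg_right h1 hba.le
    rw [hceq, div_mul_cancel₀ _ hba.ne'] at h2
    linarith
  · subst h; simp
  · have hcont : ContinuousOn f (Icc b a) := fun z hz =>
      (hd z (lt_of_lt_of_le hb hz.1)).continuousAt.continuousWithinAt
    obtain ⟨c, hc, hceq⟩ := exists_hasDerivAt_eq_slope f f' h hcont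
      (fun z hz => hd z (lt_trans hb hz.1))
    have h1 : f' c ≤ f' a := hm (mem_Ioi.mpr (lt_trans hb hc.1)) (mem_Ioi.mpr ha) hc.2.le
    have hab : 0 < a - b := sub_pos.mpr h
    have h2 : f' c * (a - b) ≤ f' a * (a - b) := mul_le_mul_of_nonneg_right h1 hab.le
    rw [hceq, div_mul_cancel₀ _ hab.ne'] at h2
    have h3 : f' a * (b - a) = -(f' a * (a - b)) := by ring
    linarith

lemma strictMono_le_apply {k n : ℕ} {p : Fin k → Fin n} (hp : StrictMono p) (i : Fin k) :
    (i : ℕ) ≤ (p i : ℕ) := by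
  have H : ∀ m : ℕ, ∀ j : Fin k, (j : ℕ) = m → m ≤ (p j : ℕ) := by
    intro m
    induction m with
    | zero => intro j _; exact Nat.zero_le _
    | succ m ih =>
      intro j hj
      have hm : m < k := by omega
      have hlt : (⟨m, hm⟩ : Fin k) < j := by
        rw [Fin.lt_def]; simp; omega
      have h1 := hp hlt
      rw [Fin.lt_def] at h1
      have h2 := ih ⟨m, hm⟩ rfl
      simp at h1 h2
      omega
  exact H (i : ℕ) i rfl

lemma sorted_sum_le {n k : ℕ} {g : Fin n → ℝ} (hg : Monotone g) (hk : k ≤ n)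
    {p : Fin k → Fin n} (hp : Function.Injective p) :
    ∑ i : Fin k, g (Fin.castLE hk i) ≤ ∑ i : Fin k, g (p i) := by
  classical
  set ρ := Tuple.sort p with hρ
  have hmono : Monotone (p ∘ ρ) := Tuple.monotone_sort p
  have hsm : StrictMono (p ∘ ρ) := hmono.strictMono_of_injective (hp.comp ρ.injective)
  have h1 : ∀ i : Fin k, g (Fin.castLE hk i) ≤ g (p (ρ i)) := by
    intro i
    apply hg
    have := strictMono_le_apply hsm i
    rw [Fin.le_def]
    simpa using this
  calc ∑ i : Fin k, g (Fin.castLE hk i) ≤ ∑ i : Fin k, g (p (ρ i)) :=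
        Finset.sum_le_sum fun i _ => h1 i
    _ = ∑ i : Fin k, g (p i) := Equiv.sum_comp ρ fun i => g (p i)

/-- sum of the `k` smallest values of `f` is at most the sum over any `k`-subset. -/
lemma smallest_le_subset {n k : ℕ} (f : Fin n → ℝ) (hk : k ≤ n) (u : Finset (Fin n))
    (hu : u.card = k) :
    ∑ i : Fin k, f (Tuple.sort f (Fin.castLE hk i)) ≤ ∑ i ∈ u, f i := by
  classical
  have himg : Finset.image (u.orderEmbOfFin hu) Finset.univ = u := by
    ext a
    simp only [Finset.mem_image, Finset.mem_univ, true_and]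
    constructor
    · rintro ⟨i, rfl⟩; exact u.orderEmbOfFin_mem hu i
    · intro ha
      have : a ∈ Set.range (u.orderEmbOfFin hu) := by
        rw [Finset.range_orderEmbOfFin]; exact ha
      obtain ⟨i, hi⟩ := this
      exact ⟨i, hi⟩
  have hsum : ∑ i ∈ u, f i = ∑ i : Fin k, f (u.orderEmbOfFin hu i) := by
    rw [← Finset.sum_congr himg fun _ _ => rfl, Finset.sum_image]
    intro a _ b _ hab
    exact (u.orderEmbOfFin hu).injective hab
  set σ := Tuple.sort f with hσ
  set p : Fin k → Fin n := fun i => σ.symm (u.orderEmbOfFin hu i) with hp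
  have hpinj : Function.Injective p :=
    σ.symm.injective.comp (u.orderEmbOfFin hu).injective
  have hmono : Monotone (f ∘ σ) := Tuple.monotone_sort f
  have key := sorted_sum_le hmono hk hpinj
  have heq : ∀ i : Fin k, (f ∘ σ) (p i) = f (u.orderEmbOfFin hu i) := by
    intro i
    simp [hp, Function.comp]
  rw [hsum]
  calc ∑ i : Fin k, f (σ (Fin.castLE hk i)) = ∑ i : Fin k, (f ∘ σ) (Fin.castLE hk i) := rfl
    _ ≤ ∑ i : Fin k, (f ∘ σ) (p i) := key
    _ = ∑ i : Fin k, f (u.orderEmbOfFin hu i) := Finset.sum_congr rfl fun i _ => heq i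

/-- Abel summation bound. -/
lemma abel_nonpos (c g : ℕ → ℝ) (n : ℕ)
    (hc : ∀ i j, i ≤ j → j < n → c i ≤ c j)
    (hP : ∀ k, k ≤ n → 0 ≤ ∑ i ∈ Finset.range k, g i)
    (hPn : ∑ i ∈ Finset.range n, g i = 0) :
    ∑ i ∈ Finset.range n, c i * g i ≤ 0 := by
  have h := Finset.sum_range_by_parts c g n
  simp only [smul_eq_mul] at h
  rw [h, hPn, mul_zero, zero_sub, neg_nonpos]
  apply Finset.sum_nonneg
  intro i hi
  rw [Finset.mem_range] at hi
  have h1 : c i ≤ c (i + 1) := hc i (i + 1) (Nat.le_succ i) (by omega)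
  have h2 : 0 ≤ ∑ j ∈ Finset.range (i + 1), g j := hP (i + 1) (by omega)
  exact mul_nonneg (by linarith) h2

end WRSC

/-- For `0 < α ≤ 1` and fixed `t > 0`, the map `(λ₁,…,λₙ) ↦ ∑ u(λᵢ t)` with
`u(s) = s^α / (e^{s^α} − 1)` is Schur-convex on `(0,∞)ⁿ`: if `λ` is majorized by `θ`
then `∑ u(λᵢ t) ≤ ∑ u(θᵢ t)`. -/
theorem weibull_rhr_schur_convex
    {n : ℕ} (α : ℝ) (hα : 0 < α) (hα1 : α ≤ 1) (t : ℝ) (ht : 0 < t)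
    (lam θ : Fin n → ℝ) (hlam : ∀ i, 0 < lam i) (hθ : ∀ i, 0 < θ i)
    (hmaj : MajorizedBy lam θ) :
    ∑ i, (lam i * t) ^ α / (exp ((lam i * t) ^ α) - 1) ≤
      ∑ i, (θ i * t) ^ α / (exp ((θ i * t) ^ α) - 1) := by
  classical
  obtain ⟨hweak, hsumeq⟩ := hmaj
  set σ := Tuple.sort lam with hσ
  set τ := Tuple.sort θ with hτ
  have hxmono : Monotone (lam ∘ σ) := Tuple.monotone_sort lam
  set X : ℕ → ℝ := fun i => if h : i < n then lam (σ ⟨i, h⟩) else 1 with hX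
  set Y : ℕ → ℝ := fun i => if h : i < n then θ (τ ⟨i, h⟩) else 1 with hY
  have hXpos : ∀ i, 0 < X i := by
    intro i
    by_cases h : i < n
    · simp only [hX, dif_pos h]; exact hlam _
    · simp only [hX, dif_neg h]; norm_num
  have hYpos : ∀ i, 0 < Y i := by
    intro i
    by_cases h : i < n
    · simp only [hY, dif_pos h]; exact hθ _
    · simp only [hY, dif_neg h]; norm_num
  have hXmono : ∀ i j, i ≤ j → j < n → X i ≤ X j := by
    intro i j hij hj
    have hi : i < n := lt_of_le_of_lt hij hj
    simp only [hX, dif_pos hi, dif_pos hj]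
    exact hxmono (show (⟨i, hi⟩ : Fin n) ≤ ⟨j, hj⟩ from hij)
  -- sums over ranges equal sums over Fin k
  have hXsum : ∀ k (hk : k ≤ n),
      ∑ i ∈ Finset.range k, X i = ∑ i : Fin k, lam (σ (Fin.castLE hk i)) := by
    intro k hk
    rw [← Fin.sum_univ_eq_sum_range]
    refine Finset.sum_congr rfl fun i _ => ?_
    have h : (i : ℕ) < n := lt_of_lt_of_le i.isLt hk
    simp only [hX, dif_pos h]
    rfl
  have hYsum : ∀ k (hk : k ≤ n),
      ∑ i ∈ Finset.range k, Y i = ∑ i : Fin k, θ (τ (Fin.castLE hk i)) := by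
    intro k hk
    rw [← Fin.sum_univ_eq_sum_range]
    refine Finset.sum_congr rfl fun i _ => ?_
    have h : (i : ℕ) < n := lt_of_lt_of_le i.isLt hk
    simp only [hY, dif_pos h]
    rfl
  -- partial sum domination
  have hpart : ∀ k (hk : k ≤ n), ∑ i ∈ Finset.range k, Y i ≤ ∑ i ∈ Finset.range k, X i := by
    intro k hk
    set s : Finset (Fin n) := Finset.image (fun i : Fin k => σ (Fin.castLE hk i)) Finset.univ
      with hs
    have hinj : Function.Injective (fun i : Fin k => σ (Fin.castLE hk i)) :=
      σ.injective.comp (Fin.castLE_injective hk)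
    have hscard : s.card = k := by
      rw [hs, Finset.card_image_of_injective _ hinj, Finset.card_univ, Fintype.card_fin]
    have hssum : ∑ i ∈ s, lam i = ∑ i : Fin k, lam (σ (Fin.castLE hk i)) := by
      rw [hs, Finset.sum_image (fun a _ b _ hab => hinj hab)]
    obtain ⟨u, hucard, hule⟩ := hweak s
    have hucard' : u.card = k := by rw [hucard, hscard]
    have key := WRSC.smallest_le_subset θ hk u hucard'
    rw [hYsum k hk, hXsum k hk]
    calc ∑ i : Fin k, θ (τ (Fin.castLE hk i)) ≤ ∑ i ∈ u, θ i := key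
      _ ≤ ∑ i ∈ s, lam i := hule
      _ = ∑ i : Fin k, lam (σ (Fin.castLE hk i)) := hssum
  -- total sums
  have hcast : ∀ i : Fin n, Fin.castLE (le_refl n) i = i := fun i => Fin.ext rfl
  have hXtot : ∑ i ∈ Finset.range n, X i = ∑ i, lam i := by
    rw [hXsum n (le_refl n)]
    calc ∑ i : Fin n, lam (σ (Fin.castLE (le_refl n) i)) = ∑ i : Fin n, lam (σ i) :=
          Finset.sum_congr rfl fun i _ => by rw [hcast i]
      _ = ∑ i, lam i := Equiv.sum_comp σ lam
  have hYtot : ∑ i ∈ Finset.range n, Y i = ∑ i, θ i := by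
    rw [hYsum n (le_refl n)]
    calc ∑ i : Fin n, θ (τ (Fin.castLE (le_refl n) i)) = ∑ i : Fin n, θ (τ i) :=
          Finset.sum_congr rfl fun i _ => by rw [hcast i]
      _ = ∑ i, θ i := Equiv.sum_comp τ θ
  -- Abel summation
  have habel : ∑ i ∈ Finset.range n, (WRSC.Gder α t (X i)) * (X i - Y i) ≤ 0 := by
    apply WRSC.abel_nonpos
    · intro i j hij hj
      exact WRSC.Gder_mono hα hα1 ht (mem_Ioi.mpr (hXpos i)) (mem_Ioi.mpr (hXpos j))
        (hXmono i j hij hj)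
    · intro k hk
      rw [Finset.sum_sub_distrib]
      have := hpart k hk
      linarith
    · rw [Finset.sum_sub_distrib, hXtot, hYtot, hsumeq, sub_self]
  -- support lines
  have hsup : ∀ i ∈ Finset.range n,
      WRSC.Gfun α t (X i) + WRSC.Gder α t (X i) * (Y i - X i) ≤ WRSC.Gfun α t (Y i) := by
    intro i _
    exact WRSC.support_line (fun z hz => WRSC.Gfun_hasDeriv hα ht hz)
      (WRSC.Gder_mono hα hα1 ht) (hXpos i) (hYpos i)
  have h1 := Finset.sum_le_sum hsup
  rw [Finset.sum_add_distrib] at h1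
  have h2 : ∑ i ∈ Finset.range n, WRSC.Gder α t (X i) * (Y i - X i)
      = -∑ i ∈ Finset.range n, (WRSC.Gder α t (X i)) * (X i - Y i) := by
    rw [← Finset.sum_neg_distrib]
    exact Finset.sum_congr rfl fun i _ => by ring
  have hmain : ∑ i ∈ Finset.range n, WRSC.Gfun α t (X i)
      ≤ ∑ i ∈ Finset.range n, WRSC.Gfun α t (Y i) := by
    rw [h2] at h1
    linarith
  -- translate back to the goal
  have hGX : ∑ i ∈ Finset.range n, WRSC.Gfun α t (X i)
      = ∑ i, (lam i * t) ^ α / (exp ((lam i * t) ^ α) - 1) := by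
    rw [← Fin.sum_univ_eq_sum_range]
    calc ∑ i : Fin n, WRSC.Gfun α t (X (i : ℕ))
        = ∑ i : Fin n, WRSC.Gfun α t (lam (σ i)) := by
          refine Finset.sum_congr rfl fun i _ => ?_
          simp only [hX, dif_pos i.isLt]
      _ = ∑ i : Fin n, WRSC.Gfun α t (lam i) := Equiv.sum_comp σ fun i => WRSC.Gfun α t (lam i)
      _ = ∑ i, (lam i * t) ^ α / (exp ((lam i * t) ^ α) - 1) := rfl
  have hGY : ∑ i ∈ Finset.range n, WRSC.Gfun α t (Y i)
      = ∑ i, (θ i * t) ^ α / (exp ((θ i * t) ^ α) - 1) := by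
    rw [← Fin.sum_univ_eq_sum_range]
    calc ∑ i : Fin n, WRSC.Gfun α t (Y (i : ℕ))
        = ∑ i : Fin n, WRSC.Gfun α t (θ (τ i)) := by
          refine Finset.sum_congr rfl fun i _ => ?_
          simp only [hY, dif_pos i.isLt]
      _ = ∑ i : Fin n, WRSC.Gfun α t (θ i) := Equiv.sum_comp τ fun i => WRSC.Gfun α t (θ i)
      _ = ∑ i, (θ i * t) ^ α / (exp ((θ i * t) ^ α) - 1) := rfl
  rw [hGX, hGY] at hmain
  exact hmain
end

section
/- For all reals s₁, s₂, s₃ > 0 and α > 0, with u(x) = x^α / (e^{x^α} − 1) and v(x) = x^α / (1 − e^{−x^α}), the expression E = u(s₁)u(s₂)·(v(s₂) − v(s₁)) + u(s₁)u(s₃)·(v(s₃) − v(s₁)) + u(s₃)u(s₂)·(v(s₂) − v(s₃)) is nonnegative whenever s₁ ≤ s₃ ≤ s₂ or s₁ ≤ s₂ ≤ s₃. -/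
open Real

private lemma exp_sub_one_pos' {t : ℝ} (ht : 0 < t) : 0 < exp t - 1 :=
  sub_pos.mpr (by simpa using Real.exp_lt_exp.mpr ht)

private lemma one_sub_exp_neg_pos' {t : ℝ} (ht : 0 < t) : 0 < 1 - exp (-t) :=
  sub_pos.mpr (Real.exp_lt_one_iff.mpr (neg_neg_iff_pos.mpr ht))

/-- `u(t) = t/(e^t-1)` is positive. -/
private lemma U_pos' {t : ℝ} (ht : 0 < t) : 0 < t / (exp t - 1) :=
  div_pos ht (exp_sub_one_pos' ht)

/-- `(e^t-1)/t` is monotone, hence `u` is antitone. -/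
private lemma U_anti' {a b : ℝ} (ha : 0 < a) (hab : a ≤ b) :
    b / (exp b - 1) ≤ a / (exp a - 1) := by
  have hb : 0 < b := lt_of_lt_of_le ha hab
  have h := convexOn_exp.secant_mono (Set.mem_univ (0:ℝ)) (Set.mem_univ a)
    (Set.mem_univ b) (ne_of_gt ha) (ne_of_gt hb) hab
  simp only [Real.exp_zero, sub_zero] at h
  have h1 : 0 < exp a - 1 := exp_sub_one_pos' ha
  have h2 : 0 < exp b - 1 := exp_sub_one_pos' hb
  rw [div_le_div_iff₀ h2 h1]
  rw [div_le_div_iff₀ ha hb] at h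
  nlinarith

/-- `(1-e^{-t})/t` is antitone, hence `v` is monotone. -/
private lemma V_mono' {a b : ℝ} (ha : 0 < a) (hab : a ≤ b) :
    a / (1 - exp (-a)) ≤ b / (1 - exp (-b)) := by
  have hb : 0 < b := lt_of_lt_of_le ha hab
  have h := convexOn_exp.secant_mono (Set.mem_univ (0:ℝ)) (Set.mem_univ (-b))
    (Set.mem_univ (-a)) (by simpa using ne_of_gt hb) (by simpa using ne_of_gt ha)
    (by linarith)
  simp only [Real.exp_zero, sub_zero] at h
  have h1 : 0 < 1 - exp (-a) := one_sub_exp_neg_pos' ha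
  have h2 : 0 < 1 - exp (-b) := one_sub_exp_neg_pos' hb
  have e1 : (exp (-b) - 1) / (-b) = (1 - exp (-b)) / b := by
    rw [← neg_div_neg_eq]; ring_nf
  have e2 : (exp (-a) - 1) / (-a) = (1 - exp (-a)) / a := by
    rw [← neg_div_neg_eq]; ring_nf
  rw [e1, e2, div_le_div_iff₀ hb ha] at h
  rw [div_le_div_iff₀ h1 h2]
  nlinarith

private lemma key_sign_abstract (Ua Ub Uc Va Vb Vc : ℝ)
    (hUa : 0 < Ua) (hUb : 0 < Ub) (hUc : 0 < Uc)
    (h : (Va ≤ Vc ∧ Vc ≤ Vb) ∨ (Uc ≤ Ub ∧ Ub ≤ Ua ∧ Va ≤ Vb ∧ Vb ≤ Vc)) :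
    0 ≤ Ua * Ub * (Vb - Va) + Ua * Uc * (Vc - Va) + Uc * Ub * (Vb - Vc) := by
  rcases h with ⟨h1, h2⟩ | ⟨h1, h2, h3, h4⟩
  · have t1 : 0 ≤ Ua * Ub * (Vb - Va) := by
      apply mul_nonneg (by positivity); linarith
    have t2 : 0 ≤ Ua * Uc * (Vc - Va) := by
      apply mul_nonneg (by positivity); linarith
    have t3 : 0 ≤ Uc * Ub * (Vb - Vc) := by
      apply mul_nonneg (by positivity); linarith
    linarith
  · nlinarith [mul_nonneg (mul_nonneg hUa.le hUb.le) (by linarith : (0:ℝ) ≤ Vb - Va),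
      mul_nonneg (mul_nonneg hUa.le hUc.le) (by linarith : (0:ℝ) ≤ Vb - Va),
      mul_nonneg (mul_nonneg (by linarith : (0:ℝ) ≤ Ua - Ub) hUc.le)
        (by linarith : (0:ℝ) ≤ Vc - Vb)]

/-- For `s₁, s₂, s₃ > 0` and `α > 0`, with `u(x) = x^α / (e^{x^α} − 1)` and
`v(x) = x^α / (1 − e^{−x^α})`, the expression
`u(s₁)u(s₂)(v(s₂) − v(s₁)) + u(s₁)u(s₃)(v(s₃) − v(s₁)) + u(s₃)u(s₂)(v(s₂) − v(s₃))`
is nonnegative whenever `s₁ ≤ s₃ ≤ s₂` or `s₁ ≤ s₂ ≤ s₃`. -/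
theorem weibull_rhr_ratio_key_sign (α s₁ s₂ s₃ : ℝ) (hα : 0 < α)
    (hs₁ : 0 < s₁) (hs₂ : 0 < s₂) (hs₃ : 0 < s₃)
    (hord : (s₁ ≤ s₃ ∧ s₃ ≤ s₂) ∨ (s₁ ≤ s₂ ∧ s₂ ≤ s₃)) :
    0 ≤
      (s₁ ^ α / (exp (s₁ ^ α) - 1)) * (s₂ ^ α / (exp (s₂ ^ α) - 1)) *
          (s₂ ^ α / (1 - exp (-(s₂ ^ α))) - s₁ ^ α / (1 - exp (-(s₁ ^ α)))) +
        (s₁ ^ α / (exp (s₁ ^ α) - 1)) * (s₃ ^ α / (exp (s₃ ^ α) - 1)) *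
          (s₃ ^ α / (1 - exp (-(s₃ ^ α))) - s₁ ^ α / (1 - exp (-(s₁ ^ α)))) +
        (s₃ ^ α / (exp (s₃ ^ α) - 1)) * (s₂ ^ α / (exp (s₂ ^ α) - 1)) *
          (s₂ ^ α / (1 - exp (-(s₂ ^ α))) - s₃ ^ α / (1 - exp (-(s₃ ^ α)))) := by
  have ha : 0 < s₁ ^ α := rpow_pos_of_pos hs₁ α
  have hb : 0 < s₂ ^ α := rpow_pos_of_pos hs₂ α
  have hc : 0 < s₃ ^ α := rpow_pos_of_pos hs₃ α
  apply key_sign_abstract _ _ _ _ _ _ (U_pos' ha) (U_pos' hb) (U_pos' hc)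
  rcases hord with ⟨h13, h32⟩ | ⟨h12, h23⟩
  · have hac : s₁ ^ α ≤ s₃ ^ α := rpow_le_rpow hs₁.le h13 hα.le
    have hcb : s₃ ^ α ≤ s₂ ^ α := rpow_le_rpow hs₃.le h32 hα.le
    exact Or.inl ⟨V_mono' ha hac, V_mono' hc hcb⟩
  · have hab : s₁ ^ α ≤ s₂ ^ α := rpow_le_rpow hs₁.le h12 hα.le
    have hbc : s₂ ^ α ≤ s₃ ^ α := rpow_le_rpow hs₂.le h23 hα.le
    exact Or.inr ⟨U_anti' hb hbc, U_anti' ha hab, V_mono' ha hab, V_mono' hb hbc⟩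
end

section
/- For all reals s₁, s₂, s₃ > 0, all α > 0, and all positive weights p, q > 0, with u(x) = x^α / (e^{x^α} − 1) and v(x) = x^α / (1 − e^{−x^α}), the expression E = p²·u(s₁)u(s₂)·(v(s₂) − v(s₁)) + pq·u(s₁)u(s₃)·(v(s₃) − v(s₁)) + pq·u(s₃)u(s₂)·(v(s₂) − v(s₃)) is nonnegative whenever s₁ ≤ s₃ ≤ s₂ or s₁ ≤ s₂ ≤ s₃. -/
open Real

/-- The slope `(e^y - 1)/y` is monotone (convexity of exp). -/
lemma exp_slope_mono {x y : ℝ} (hx : x ≠ 0) (hy : y ≠ 0) (hxy : x ≤ y) :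
    (exp x - 1) / x ≤ (exp y - 1) / y := by
  have := convexOn_exp.secant_mono (a := 0) (x := x) (y := y)
    (Set.mem_univ _) (Set.mem_univ _) (Set.mem_univ _) hx hy hxy
  simpa using this

lemma slope_pos {x : ℝ} (hx : x ≠ 0) : 0 < (exp x - 1) / x := by
  rcases lt_or_gt_of_ne hx with h | h
  · have : exp x < 1 := exp_lt_one_iff.mpr h
    exact div_pos_of_neg_of_neg (by linarith) h
  · have : 1 < exp x := one_lt_exp_iff.mpr h
    exact div_pos (by linarith) h

/-- `u(y) = y / (e^y - 1)` as inverse of the slope. -/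
lemma u_eq {y : ℝ} (hy : 0 < y) : y / (exp y - 1) = ((exp y - 1) / y)⁻¹ := by
  rw [inv_div]

/-- `v(y) = y / (1 - e^{-y})` equals inverse slope at `-y`. -/
lemma v_eq {y : ℝ} (hy : 0 < y) : y / (1 - exp (-y)) = ((exp (-y) - 1) / (-y))⁻¹ := by
  rw [inv_div, neg_div, ← div_neg, neg_sub]

lemma u_pos {y : ℝ} (hy : 0 < y) : 0 < y / (exp y - 1) := by
  rw [u_eq hy]; exact inv_pos.mpr (slope_pos hy.ne')

lemma v_pos {y : ℝ} (hy : 0 < y) : 0 < y / (1 - exp (-y)) := by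
  rw [v_eq hy]; exact inv_pos.mpr (slope_pos (neg_ne_zero.mpr hy.ne'))

/-- `u` is antitone on positives. -/
lemma u_anti {a b : ℝ} (ha : 0 < a) (hb : 0 < b) (hab : a ≤ b) :
    b / (exp b - 1) ≤ a / (exp a - 1) := by
  rw [u_eq ha, u_eq hb]
  exact inv_anti₀ (slope_pos ha.ne') (exp_slope_mono ha.ne' hb.ne' hab)

/-- `v` is monotone on positives. -/
lemma v_mono {a b : ℝ} (ha : 0 < a) (hb : 0 < b) (hab : a ≤ b) :
    a / (1 - exp (-a)) ≤ b / (1 - exp (-b)) := by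
  rw [v_eq ha, v_eq hb]
  exact inv_anti₀ (slope_pos (neg_ne_zero.mpr hb.ne'))
    (exp_slope_mono (neg_ne_zero.mpr hb.ne') (neg_ne_zero.mpr ha.ne') (by linarith))

/-- For `s₁, s₂, s₃ > 0`, `α > 0` and positive weights `p, q`, with
`u(x) = x^α / (e^{x^α} − 1)` and `v(x) = x^α / (1 − e^{−x^α})`, the expression
`p²·u(s₁)u(s₂)(v(s₂) − v(s₁)) + pq·u(s₁)u(s₃)(v(s₃) − v(s₁)) + pq·u(s₃)u(s₂)(v(s₂) − v(s₃))`
is nonnegative whenever `s₁ ≤ s₃ ≤ s₂` or `s₁ ≤ s₂ ≤ s₃`. -/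
theorem multiple_outlier_weibull_rhr_ratio_key_sign (α s₁ s₂ s₃ p q : ℝ) (hα : 0 < α)
    (hs₁ : 0 < s₁) (hs₂ : 0 < s₂) (hs₃ : 0 < s₃) (hp : 0 < p) (hq : 0 < q)
    (hord : (s₁ ≤ s₃ ∧ s₃ ≤ s₂) ∨ (s₁ ≤ s₂ ∧ s₂ ≤ s₃)) :
    0 ≤
      p ^ 2 * ((s₁ ^ α / (exp (s₁ ^ α) - 1)) * (s₂ ^ α / (exp (s₂ ^ α) - 1)) *
          (s₂ ^ α / (1 - exp (-(s₂ ^ α))) - s₁ ^ α / (1 - exp (-(s₁ ^ α))))) +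
        p * q * ((s₁ ^ α / (exp (s₁ ^ α) - 1)) * (s₃ ^ α / (exp (s₃ ^ α) - 1)) *
          (s₃ ^ α / (1 - exp (-(s₃ ^ α))) - s₁ ^ α / (1 - exp (-(s₁ ^ α))))) +
        p * q * ((s₃ ^ α / (exp (s₃ ^ α) - 1)) * (s₂ ^ α / (exp (s₂ ^ α) - 1)) *
          (s₂ ^ α / (1 - exp (-(s₂ ^ α))) - s₃ ^ α / (1 - exp (-(s₃ ^ α))))) := by
  have hy₁ : 0 < s₁ ^ α := rpow_pos_of_pos hs₁ α
  have hy₂ : 0 < s₂ ^ α := rpow_pos_of_pos hs₂ α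
  have hy₃ : 0 < s₃ ^ α := rpow_pos_of_pos hs₃ α
  set y₁ := s₁ ^ α
  set y₂ := s₂ ^ α
  set y₃ := s₃ ^ α
  have hu₁ := u_pos hy₁
  have hu₂ := u_pos hy₂
  have hu₃ := u_pos hy₃
  rcases hord with ⟨h13, h32⟩ | ⟨h12, h23⟩
  · -- s₁ ≤ s₃ ≤ s₂ : all v-differences nonneg
    have hy13 : y₁ ≤ y₃ := rpow_le_rpow hs₁.le h13 hα.le
    have hy32 : y₃ ≤ y₂ := rpow_le_rpow hs₃.le h32 hα.le
    have hv13 := v_mono hy₁ hy₃ hy13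
    have hv32 := v_mono hy₃ hy₂ hy32
    have hv12 := v_mono hy₁ hy₂ (hy13.trans hy32)
    have h1 : 0 ≤ y₂ / (1 - exp (-y₂)) - y₁ / (1 - exp (-y₁)) := by linarith
    have h2 : 0 ≤ y₃ / (1 - exp (-y₃)) - y₁ / (1 - exp (-y₁)) := by linarith
    have h3 : 0 ≤ y₂ / (1 - exp (-y₂)) - y₃ / (1 - exp (-y₃)) := by linarith
    positivity
  · -- s₁ ≤ s₂ ≤ s₃
    have hy12 : y₁ ≤ y₂ := rpow_le_rpow hs₁.le h12 hα.le
    have hy23 : y₂ ≤ y₃ := rpow_le_rpow hs₂.le h23 hα.le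
    have hv12 := v_mono hy₁ hy₂ hy12
    have hv23 := v_mono hy₂ hy₃ hy23
    have hu12 := u_anti hy₁ hy₂ hy12
    have hv13 := v_mono hy₁ hy₃ (hy12.trans hy23)
    have key : y₂ / (exp y₂ - 1) * (y₃ / (1 - exp (-y₃)) - y₂ / (1 - exp (-y₂))) ≤
        y₁ / (exp y₁ - 1) * (y₃ / (1 - exp (-y₃)) - y₁ / (1 - exp (-y₁))) :=
      mul_le_mul hu12 (by linarith) (by linarith) hu₁.le
    have h1 : 0 ≤ p ^ 2 * (y₁ / (exp y₁ - 1) * (y₂ / (exp y₂ - 1)) *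
        (y₂ / (1 - exp (-y₂)) - y₁ / (1 - exp (-y₁)))) := by
      have := sub_nonneg.mpr hv12
      positivity
    have h2 : 0 ≤ (p * q * (y₃ / (exp y₃ - 1))) *
        (y₁ / (exp y₁ - 1) * (y₃ / (1 - exp (-y₃)) - y₁ / (1 - exp (-y₁))) -
         y₂ / (exp y₂ - 1) * (y₃ / (1 - exp (-y₃)) - y₂ / (1 - exp (-y₂)))) :=
      mul_nonneg (by positivity) (by linarith)
    nlinarith [h1, h2]
end

section
/- The function M₂(t) = −1 + e^t·(1 − t·(3 − 2e^t + t)) is nonnegative for all t ≥ 0; consequently, M₁(t) = −1 + e^{2t}(t − 1) − t(3 + t) + e^t(2 − 2t(t − 1)) is nonnegative for all t ≥ 0. -/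
open Real

lemma key_nonneg (f f' : ℝ → ℝ) (hf : ∀ x, HasDerivAt f (f' x) x)
    (h0 : f 0 = 0) (hf' : ∀ x, 0 ≤ x → 0 ≤ f' x) :
    ∀ t : ℝ, 0 ≤ t → 0 ≤ f t := by
  intro t ht
  have hm : MonotoneOn f (Set.Ici 0) := by
    apply monotoneOn_of_deriv_nonneg (convex_Ici 0)
    · exact Continuous.continuousOn (continuous_iff_continuousAt.2 fun x => (hf x).continuousAt)
    · intro x _; exact (hf x).differentiableAt.differentiableWithinAt
    · intro x hx
      rw [(hf x).deriv]
      exact hf' x (le_of_lt (by simpa using hx))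
  have := hm (Set.self_mem_Ici) ht ht
  linarith [h0 ▸ this]

lemma dM2 (x : ℝ) : HasDerivAt (fun t : ℝ => -1 + exp t * (1 - t * (3 - 2 * exp t + t)))
    (exp x * (-2 - x * (5 + x)) + exp x * exp x * (2 + 4 * x)) x := by
  have he := Real.hasDerivAt_exp x
  have h1 : HasDerivAt (fun t : ℝ => 3 - 2 * exp t + t) (0 - 2 * exp x + 1) x :=
    ((hasDerivAt_const x 3).sub (he.const_mul 2)).add (hasDerivAt_id x)
  have h2 : HasDerivAt (fun t : ℝ => t * (3 - 2 * exp t + t))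
      (1 * (3 - 2 * exp x + x) + x * (0 - 2 * exp x + 1)) x := (hasDerivAt_id x).mul h1
  have h3 := ((hasDerivAt_const x 1).sub h2)
  have h4 := he.mul h3
  have h5 := h4.const_add (-1)
  exact h5.congr_deriv (by simp only [Pi.sub_apply]; ring)

lemma dM1' (x : ℝ) : HasDerivAt
    (fun t : ℝ => exp (2 * t) * (2 * t - 1) + exp t * (4 - 2 * t - 2 * t ^ 2) - 3 - 2 * t)
    (2 * (-1 + exp x * (1 - x * (3 - 2 * exp x + x)))) x := by
  have he := Real.hasDerivAt_exp x
  have he2 : HasDerivAt (fun t : ℝ => exp (2 * t)) (exp (2 * x) * 2) x :=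
    by simpa using ((hasDerivAt_id x).const_mul 2).exp
  have h1 : HasDerivAt (fun t : ℝ => exp (2 * t) * (2 * t - 1))
      (exp (2 * x) * 2 * (2 * x - 1) + exp (2 * x) * 2) x := by
    exact (he2.mul (((hasDerivAt_id x).const_mul 2).sub_const 1)).congr_deriv (by simp only [id]; ring)
  have h2 : HasDerivAt (fun t : ℝ => 4 - 2 * t - 2 * t ^ 2)
      (0 - 2 * 1 - 2 * (2 * x ^ 1)) x :=
    (((hasDerivAt_const x 4).sub ((hasDerivAt_id x).const_mul 2)).sub
      ((hasDerivAt_pow 2 x).const_mul 2))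
  have h3 := he.mul h2
  have h4 := ((h1.add h3).sub_const 3).sub ((hasDerivAt_id x).const_mul 2)
  have hexp2 : exp (2 * x) = exp x * exp x := by
    rw [two_mul, exp_add]
  exact h4.congr_deriv (by rw [hexp2]; ring)

lemma dM1 (x : ℝ) : HasDerivAt
    (fun t : ℝ => -1 + exp (2 * t) * (t - 1) - t * (3 + t) + exp t * (2 - 2 * t * (t - 1)))
    (exp (2 * x) * (2 * x - 1) + exp x * (4 - 2 * x - 2 * x ^ 2) - 3 - 2 * x) x := by
  have he := Real.hasDerivAt_exp x
  have he2 : HasDerivAt (fun t : ℝ => exp (2 * t)) (exp (2 * x) * 2) x :=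
    by simpa using ((hasDerivAt_id x).const_mul 2).exp
  have h1 : HasDerivAt (fun t : ℝ => exp (2 * t) * (t - 1))
      (exp (2 * x) * 2 * (x - 1) + exp (2 * x) * 1) x := he2.mul ((hasDerivAt_id x).sub_const 1)
  have h2 : HasDerivAt (fun t : ℝ => t * (3 + t)) (1 * (3 + x) + x * (0 + 1)) x :=
    (hasDerivAt_id x).mul ((hasDerivAt_const x 3).add (hasDerivAt_id x))
  have h3 : HasDerivAt (fun t : ℝ => 2 - 2 * t * (t - 1))
      (0 - (2 * 1 * (x - 1) + 2 * x * 1)) x :=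
    (hasDerivAt_const x 2).sub (((hasDerivAt_id x).const_mul 2).mul ((hasDerivAt_id x).sub_const 1))
  have h4 := ((h1.const_add (-1)).sub h2).add (he.mul h3)
  exact h4.congr_deriv (by ring)

/-- `M₂(t) = −1 + e^t (1 − t(3 − 2e^t + t)) ≥ 0` for `t ≥ 0`, and consequently
`M₁(t) = −1 + e^{2t}(t − 1) − t(3 + t) + e^t(2 − 2t(t − 1)) ≥ 0` for `t ≥ 0`. -/
theorem M2_and_M1_nonneg :
    (∀ t : ℝ, 0 ≤ t → 0 ≤ -1 + exp t * (1 - t * (3 - 2 * exp t + t))) ∧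
    (∀ t : ℝ, 0 ≤ t →
      0 ≤ -1 + exp (2 * t) * (t - 1) - t * (3 + t) + exp t * (2 - 2 * t * (t - 1))) := by
  have h2 : ∀ t : ℝ, 0 ≤ t → 0 ≤ -1 + exp t * (1 - t * (3 - 2 * exp t + t)) := by
    apply key_nonneg _ _ dM2 (by simp)
    intro x hx
    have h := add_one_le_exp x
    have hp := exp_pos x
    nlinarith [mul_nonneg hx hx, mul_pos hp hp, mul_nonneg (mul_nonneg hx hx) hp.le,
      mul_nonneg hx hp.le]
  have h1' : ∀ t : ℝ, 0 ≤ t →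
      0 ≤ exp (2 * t) * (2 * t - 1) + exp t * (4 - 2 * t - 2 * t ^ 2) - 3 - 2 * t := by
    apply key_nonneg _ _ dM1' (by norm_num)
    intro x hx
    linarith [h2 x hx]
  have h1 : ∀ t : ℝ, 0 ≤ t →
      0 ≤ -1 + exp (2 * t) * (t - 1) - t * (3 + t) + exp t * (2 - 2 * t * (t - 1)) := by
    apply key_nonneg _ _ dM1 (by norm_num)
    exact h1'
  exact ⟨h2, h1⟩
end
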